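/- Let 𝒞 be a 3XOR instance and r ∈ ℕ. If there exists a degree-r pseudo-expectation for 𝒞, then there exists a degree-⌊r/3⌋ pseudo-expectation for isomorphism of the graphs G_𝒞 and G_{homog(𝒞)}. (Equivalently: if every SOS refutation of the satisfiability of 𝒞 requires degree exceeding r, then every SOS refutation of the statement 'G_𝒞 and G_{homog(𝒞)} are isomorphic' requires degree exceeding r/3.) -/

import Mathlib

open scoped Classical

noncomputable section

namespace Giso

/-- The finset of edges of a simple graph on a finite vertex type. -/
def edges {V : Type*} [Fintype V] (G : SimpleGraph V) : Finset (Sym2 V) :=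
  Finset.univ.filter fun e => e ∈ G.edgeSet

/-- A 3XOR equation on `n` variables: three distinct variable indices and a
right-hand side in `Z₂`. -/
structure XorEq (n : ℕ) where
  idx : Fin 3 → Fin n
  rhs : ZMod 2
  inj : Function.Injective idx

/-- A 3XOR instance: a list of `m` equations. -/
abbrev XorInstance (n m : ℕ) := Fin m → XorEq n

/-- The homogeneous version of an equation: the right-hand side is replaced by `0`. -/
def XorEq.homog {n : ℕ} (C : XorEq n) : XorEq n := ⟨C.idx, 0, C.inj⟩

/-- The homogeneous version of an instance. -/
def homogInst {n m : ℕ} (𝒞 : XorInstance n m) : XorInstance n m := fun i => (𝒞 i).homog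

/-- The satisfying assignments of an equation (there are four of them). -/
abbrev SatAssign {n : ℕ} (C : XorEq n) : Type :=
  {α : Fin 3 → ZMod 2 // α 0 + α 1 + α 2 = C.rhs}

/-- Vertices of the gadget graph `G_𝒞`: variable vertices `x ↦ a` and constraint
vertices `α_C`. -/
abbrev GVert {n m : ℕ} (𝒞 : XorInstance n m) : Type :=
  (Fin n × ZMod 2) ⊕ (Σ i : Fin m, SatAssign (𝒞 i))

/-- The gadget graph `G_𝒞` associated to a 3XOR instance `𝒞`. -/
def gadgetGraph {n m : ℕ} (𝒞 : XorInstance n m) : SimpleGraph (GVert 𝒞) :=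
  SimpleGraph.fromRel fun u v =>
    (∃ (j : Fin n) (a a' : ZMod 2), u = Sum.inl (j, a) ∧ v = Sum.inl (j, a')) ∨
    (∃ (i : Fin m) (α α' : SatAssign (𝒞 i)), u = Sum.inr ⟨i, α⟩ ∧ v = Sum.inr ⟨i, α'⟩) ∨
    (∃ (i : Fin m) (α : SatAssign (𝒞 i)) (t : Fin 3),
      u = Sum.inl ((𝒞 i).idx t, α.1 t) ∧ v = Sum.inr ⟨i, α⟩)

open MvPolynomial in
/-- A degree-`r` pseudo-expectation for the 3XOR instance `𝒞`, in the indeterminates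
`A[x ↦ a]` (represented by `X (x, a)`).  Existence is equivalent to the nonexistence of
a degree-`r` SOS refutation of the satisfiability of `𝒞`. -/
def IsXorPseudoExpectation {n m : ℕ} (𝒞 : XorInstance n m) (r : ℕ)
    (PE : MvPolynomial (Fin n × ZMod 2) ℝ →ₗ[ℝ] ℝ) : Prop :=
  PE 1 = 1 ∧
  (∀ (x : Fin n) (a : ZMod 2) (q : MvPolynomial (Fin n × ZMod 2) ℝ),
    q.totalDegree + 2 ≤ r → PE (((X (x, a)) ^ 2 - X (x, a)) * q) = 0) ∧
  (∀ (x : Fin n) (q : MvPolynomial (Fin n × ZMod 2) ℝ), q.totalDegree + 1 ≤ r →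
    PE ((X (x, 0) + X (x, 1) - 1) * q) = 0) ∧
  (∀ (i : Fin m) (q : MvPolynomial (Fin n × ZMod 2) ℝ), q.totalDegree + 3 ≤ r →
    PE ((∑ α : SatAssign (𝒞 i),
        X ((𝒞 i).idx 0, α.1 0) * X ((𝒞 i).idx 1, α.1 1) * X ((𝒞 i).idx 2, α.1 2) - 1)
      * q) = 0) ∧
  (∀ p : MvPolynomial (Fin n × ZMod 2) ℝ, 2 * p.totalDegree ≤ r → 0 ≤ PE (p ^ 2))

open MvPolynomial in
/-- A degree-`r` pseudo-expectation for isomorphism of the graphs `G` and `H`, in the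
indeterminates `Π[u ↦ v]` (represented by `X (u, v)`).  The edge-preservation
constraint is written with sums over ordered pairs on both sides, which is exactly
twice the polynomial of the informal statement, hence an equivalent condition. -/
def IsIsoPseudoExpectation {V W : Type*} [Fintype V] [Fintype W]
    (G : SimpleGraph V) (H : SimpleGraph W) (r : ℕ)
    (PE : MvPolynomial (V × W) ℝ →ₗ[ℝ] ℝ) : Prop :=
  PE 1 = 1 ∧
  (∀ (u : V) (v : W) (q : MvPolynomial (V × W) ℝ), q.totalDegree + 2 ≤ r →
    PE (((X (u, v)) ^ 2 - X (u, v)) * q) = 0) ∧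
  (∀ (u : V) (q : MvPolynomial (V × W) ℝ), q.totalDegree + 1 ≤ r →
    PE ((∑ v : W, X (u, v) - 1) * q) = 0) ∧
  (∀ (v : W) (q : MvPolynomial (V × W) ℝ), q.totalDegree + 1 ≤ r →
    PE ((∑ u : V, X (u, v) - 1) * q) = 0) ∧
  (∀ p : MvPolynomial (V × W) ℝ, 2 * p.totalDegree + 2 ≤ r →
    0 ≤ PE (((∑ uu ∈ Finset.univ.filter (fun uu : V × V => G.Adj uu.1 uu.2),
        ∑ vv ∈ Finset.univ.filter (fun vv : W × W => H.Adj vv.1 vv.2),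
          X (uu.1, vv.1) * X (uu.2, vv.2)) - C (2 * ((edges G).card : ℝ))) * p ^ 2)) ∧
  (∀ p : MvPolynomial (V × W) ℝ, 2 * p.totalDegree ≤ r → 0 ≤ PE (p ^ 2))

-- ============ auxiliary infrastructure ============
open MvPolynomial Finset

abbrev Pl (n : ℕ) := MvPolynomial (Fin n × ZMod 2) ℝ

variable {n m : ℕ}

lemma sum_zmod2 {M : Type*} [AddCommMonoid M] (f : ZMod 2 → M) :
    ∑ b : ZMod 2, f b = f 0 + f 1 := by
  rw [show (Finset.univ : Finset (ZMod 2)) = {0, 1} by decide]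
  rw [Finset.sum_insert (by decide), Finset.sum_singleton]

lemma zcases : ∀ a : ZMod 2, a = 0 ∨ a = 1 := by decide
lemma zne : ∀ a b : ZMod 2, a ≠ b → b = a + 1 := by decide
lemma zadd11 : ∀ a : ZMod 2, a + 1 + 1 = a := by decide

def constrS (𝒞 : XorInstance n m) (i : Fin m) : Pl n :=
  ∑ α : SatAssign (𝒞 i),
    X ((𝒞 i).idx 0, α.1 0) * X ((𝒞 i).idx 1, α.1 1) * X ((𝒞 i).idx 2, α.1 2)

def NN (𝒞 : XorInstance n m) (r : ℕ) : Submodule ℝ (Pl n) :=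
  Submodule.span ℝ (
    {p | ∃ (x : Fin n) (a : ZMod 2) (q : Pl n), q.totalDegree + 2 ≤ r ∧ p = (X (x, a) ^ 2 - X (x, a)) * q} ∪
    {p | ∃ (x : Fin n) (q : Pl n), q.totalDegree + 1 ≤ r ∧ p = (X (x, 0) + X (x, 1) - 1) * q} ∪
    {p | ∃ (i : Fin m) (q : Pl n), q.totalDegree + 3 ≤ r ∧ p = (constrS 𝒞 i - 1) * q})

variable {𝒞 : XorInstance n m}

lemma bool_mem {r : ℕ} (x : Fin n) (a : ZMod 2) {q : Pl n} (h : q.totalDegree + 2 ≤ r) :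
    (X (x, a) ^ 2 - X (x, a)) * q ∈ NN 𝒞 r :=
  Submodule.subset_span (Or.inl (Or.inl ⟨x, a, q, h, rfl⟩))

lemma line_mem {r : ℕ} (x : Fin n) {q : Pl n} (h : q.totalDegree + 1 ≤ r) :
    (X (x, 0) + X (x, 1) - 1) * q ∈ NN 𝒞 r :=
  Submodule.subset_span (Or.inl (Or.inr ⟨x, q, h, rfl⟩))

lemma constr_mem {r : ℕ} (i : Fin m) {q : Pl n} (h : q.totalDegree + 3 ≤ r) :
    (constrS 𝒞 i - 1) * q ∈ NN 𝒞 r :=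
  Submodule.subset_span (Or.inr ⟨i, q, h, rfl⟩)

lemma NN_mul {d d' : ℕ} {f : Pl n} (hf : f ∈ NN 𝒞 d) (g : Pl n)
    (h : d + g.totalDegree ≤ d') : f * g ∈ NN 𝒞 d' := by
  have hle : NN 𝒞 d ≤ Submodule.comap (LinearMap.mulRight ℝ g) (NN 𝒞 d') := by
    rw [NN, Submodule.span_le]
    rintro p ((⟨x, a, q, hq, rfl⟩ | ⟨x, q, hq, rfl⟩) | ⟨i, q, hq, rfl⟩) <;>
      refine Submodule.mem_comap.mpr ?_ <;>
      rw [LinearMap.mulRight_apply, mul_assoc]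
    · exact bool_mem x a (show (q * g).totalDegree + 2 ≤ d' from
        by have := totalDegree_mul q g; omega)
    · exact line_mem x (show (q * g).totalDegree + 1 ≤ d' from
        by have := totalDegree_mul q g; omega)
    · exact constr_mem i (show (q * g).totalDegree + 3 ≤ d' from
        by have := totalDegree_mul q g; omega)
  exact hle hf

lemma NN_mono {d d' : ℕ} (h : d ≤ d') : NN 𝒞 d ≤ NN (n := n) 𝒞 d' := fun f hf => by
  simpa [mul_one] using NN_mul hf 1 (by simp [totalDegree_one]; omega)

lemma PE_vanish {r : ℕ} {PE : Pl n →ₗ[ℝ] ℝ}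
    (h1 : ∀ (x : Fin n) (a : ZMod 2) (q : Pl n),
      q.totalDegree + 2 ≤ r → PE (((X (x, a)) ^ 2 - X (x, a)) * q) = 0)
    (h2 : ∀ (x : Fin n) (q : Pl n), q.totalDegree + 1 ≤ r →
      PE ((X (x, 0) + X (x, 1) - 1) * q) = 0)
    (h3 : ∀ (i : Fin m) (q : Pl n), q.totalDegree + 3 ≤ r →
      PE ((constrS 𝒞 i - 1) * q) = 0)
    {f : Pl n} (hf : f ∈ NN 𝒞 r) : PE f = 0 := by
  have hle : NN 𝒞 r ≤ LinearMap.ker PE := by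
    rw [NN, Submodule.span_le]
    rintro p ((⟨x, a, q, hq, rfl⟩ | ⟨x, q, hq, rfl⟩) | ⟨i, q, hq, rfl⟩)
    · exact h1 x a q hq
    · exact h2 x q hq
    · exact h3 i q hq
  exact hle hf

-- degree helpers
lemma deg_le_mul {p q : Pl n} {a b : ℕ} (hp : p.totalDegree ≤ a) (hq : q.totalDegree ≤ b) :
    (p * q).totalDegree ≤ a + b := (totalDegree_mul p q).trans (add_le_add hp hq)

lemma deg_X (u : Fin n × ZMod 2) : (X u : Pl n).totalDegree ≤ 1 := (totalDegree_X u).le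

lemma deg_X2 (u : Fin n × ZMod 2) : ((X u : Pl n) ^ 2).totalDegree ≤ 2 :=
  (totalDegree_pow _ 2).trans (by simp [totalDegree_X])

lemma deg_prod3 (v : Fin 3 → Fin n) (c : Fin 3 → ZMod 2) :
    (∏ t, X (v t, c t) : Pl n).totalDegree ≤ 3 :=
  (totalDegree_finset_prod _ _).trans (by simp [totalDegree_X])

lemma deg_prod_erase (v : Fin 3 → Fin n) (c : Fin 3 → ZMod 2) (s : Fin 3) :
    (∏ t ∈ Finset.univ.erase s, X (v t, c t) : Pl n).totalDegree ≤ 2 :=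
  (totalDegree_finset_prod _ _).trans
    (by simp [totalDegree_X, Finset.card_erase_of_mem])

lemma totalDegree_aeval_le {σ : Type*} [Fintype σ] (f : σ → Pl n) (k : ℕ)
    (hf : ∀ i, (f i).totalDegree ≤ k) (p : MvPolynomial σ ℝ) :
    ((aeval f) p).totalDegree ≤ k * p.totalDegree := by
  rw [aeval_def, eval₂_eq]
  apply totalDegree_finsetSum_le
  intro d hd
  have h1 : ((algebraMap ℝ (Pl n)) (coeff d p)).totalDegree = 0 := totalDegree_C _
  have h2 : (∏ i ∈ d.support, f i ^ d i).totalDegree ≤ ∑ i ∈ d.support, d i * k :=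
    (totalDegree_finset_prod _ _).trans (Finset.sum_le_sum fun i _ =>
      (totalDegree_pow _ _).trans (Nat.mul_le_mul_left _ (hf i)))
  have h3 : ∑ i ∈ d.support, d i * k ≤ p.totalDegree * k := by
    rw [← Finset.sum_mul]
    exact Nat.mul_le_mul_right _ (le_totalDegree hd)
  calc ((algebraMap ℝ (Pl n)) (coeff d p) * ∏ i ∈ d.support, f i ^ d i).totalDegree
      ≤ 0 + (p.totalDegree * k) := deg_le_mul h1.le (h2.trans h3)
    _ = k * p.totalDegree := by ring

-- ============ substitution ============

def subMap (𝒞 : XorInstance n m) : GVert 𝒞 × GVert (homogInst 𝒞) → Pl n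
  | (Sum.inl (x, a), Sum.inl (y, b)) => if x = y then X (x, a + b) else 0
  | (Sum.inr ⟨i, α⟩, Sum.inr ⟨j, β⟩) =>
      if i = j then ∏ t, X ((𝒞 i).idx t, α.1 t + β.1 t) else 0
  | (Sum.inl _, Sum.inr _) => 0
  | (Sum.inr _, Sum.inl _) => 0

@[simp] lemma subMap_ll (x y : Fin n) (a b : ZMod 2) :
    subMap 𝒞 (Sum.inl (x, a), Sum.inl (y, b)) = if x = y then X (x, a + b) else 0 := rfl

@[simp] lemma subMap_lr (x : Fin n) (a : ZMod 2) (s : Σ i, SatAssign (homogInst 𝒞 i)) :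
    subMap 𝒞 (Sum.inl (x, a), Sum.inr s) = 0 := rfl

@[simp] lemma subMap_rl (s : Σ i, SatAssign (𝒞 i)) (y : Fin n) (b : ZMod 2) :
    subMap 𝒞 (Sum.inr s, Sum.inl (y, b)) = 0 := rfl

@[simp] lemma subMap_rr (i : Fin m) (α : SatAssign (𝒞 i)) (j : Fin m)
    (β : SatAssign (homogInst 𝒞 j)) :
    subMap 𝒞 (Sum.inr ⟨i, α⟩, Sum.inr ⟨j, β⟩) =
      if i = j then ∏ t, X ((𝒞 i).idx t, α.1 t + β.1 t) else 0 := rfl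

lemma deg_subMap (uv : GVert 𝒞 × GVert (homogInst 𝒞)) :
    (subMap 𝒞 uv).totalDegree ≤ 3 := by
  obtain ⟨u, v⟩ := uv
  rcases u with ⟨x, a⟩ | ⟨i, α⟩ <;> rcases v with ⟨y, b⟩ | ⟨j, β⟩ <;>
    simp only [subMap_ll, subMap_lr, subMap_rl, subMap_rr]
  · split_ifs
    · exact (deg_X _).trans (by norm_num)
    · simp
  · simp
  · simp
  · split_ifs
    · exact deg_prod3 _ _
    · simp

-- ============ basic memberships ============

lemma mem_sq (x : Fin n) (a : ZMod 2) : (X (x, a) ^ 2 - X (x, a) : Pl n) ∈ NN 𝒞 2 := by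
  simpa using bool_mem (𝒞 := 𝒞) x a (q := 1) (by simp)

lemma mem_line (x : Fin n) : (X (x, 0) + X (x, 1) - 1 : Pl n) ∈ NN 𝒞 1 := by
  simpa using line_mem (𝒞 := 𝒞) x (q := 1) (by simp)

lemma mem_line' (x : Fin n) (a : ZMod 2) :
    (X (x, a) + X (x, a + 1) - 1 : Pl n) ∈ NN 𝒞 1 := by
  rcases zcases a with rfl | rfl
  · simpa using mem_line (𝒞 := 𝒞) x
  · rw [show ((1 : ZMod 2) + 1) = 0 by decide,
      show (X (x, 1) + X (x, 0) - 1 : Pl n) = X (x, 0) + X (x, 1) - 1 by ring]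
    exact mem_line x

lemma mem_constr (i : Fin m) : (constrS 𝒞 i - 1 : Pl n) ∈ NN 𝒞 3 := by
  simpa using constr_mem (𝒞 := 𝒞) i (q := 1) (by simp)

lemma mem_XmulX {x : Fin n} {a b : ZMod 2} (hab : a ≠ b) :
    (X (x, a) * X (x, b) : Pl n) ∈ NN 𝒞 2 := by
  obtain rfl := zne a b hab
  rcases zcases a with rfl | rfl
  · rw [show ((0 : ZMod 2) + 1) = 1 by decide,
      show (X (x, 0) * X (x, 1) : Pl n)
        = (X (x, 0) + X (x, 1) - 1) * X (x, 1) - (X (x, 1) ^ 2 - X (x, 1)) * 1 by ring]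
    exact sub_mem (line_mem x (by simp [totalDegree_X]))
      (bool_mem x 1 (by simp [totalDegree_one]))
  · rw [show ((1 : ZMod 2) + 1) = 0 by decide,
      show (X (x, 1) * X (x, 0) : Pl n)
        = (X (x, 0) + X (x, 1) - 1) * X (x, 0) - (X (x, 0) ^ 2 - X (x, 0)) * 1 by ring]
    exact sub_mem (line_mem x (by simp [totalDegree_X]))
      (bool_mem x 0 (by simp [totalDegree_one]))

lemma mem_prodsq (v : Fin 3 → Fin n) (c : Fin 3 → ZMod 2) :
    ((∏ t, X (v t, c t)) ^ 2 - ∏ t, X (v t, c t) : Pl n) ∈ NN 𝒞 6 := by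
  rw [show ((∏ t, X (v t, c t)) ^ 2 - ∏ t, X (v t, c t) : Pl n)
      = (X (v 0, c 0) ^ 2 - X (v 0, c 0)) * (X (v 1, c 1) ^ 2 * X (v 2, c 2) ^ 2)
      + (X (v 1, c 1) ^ 2 - X (v 1, c 1)) * (X (v 0, c 0) * X (v 2, c 2) ^ 2)
      + (X (v 2, c 2) ^ 2 - X (v 2, c 2)) * (X (v 0, c 0) * X (v 1, c 1)) by
    rw [Fin.prod_univ_three]; ring]
  refine add_mem (add_mem (bool_mem _ _ ?_) (bool_mem _ _ ?_)) (bool_mem _ _ ?_)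
  · have := deg_le_mul (n := n) (deg_X2 (v 1, c 1)) (deg_X2 (v 2, c 2)); omega
  · have := deg_le_mul (n := n) (deg_X (v 0, c 0)) (deg_X2 (v 2, c 2)); omega
  · have := deg_le_mul (n := n) (deg_X (v 0, c 0)) (deg_X (v 1, c 1)); omega

lemma mem_prodprod (v : Fin 3 → Fin n) (c d : Fin 3 → ZMod 2) (s : Fin 3)
    (h : c s ≠ d s) :
    ((∏ t, X (v t, c t)) * ∏ t, X (v t, d t) : Pl n) ∈ NN 𝒞 6 := by
  rw [show ((∏ t, X (v t, c t)) * ∏ t, X (v t, d t) : Pl n)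
      = (X (v s, c s) * X (v s, d s)) *
        ((∏ t ∈ Finset.univ.erase s, X (v t, c t)) *
          ∏ t ∈ Finset.univ.erase s, X (v t, d t)) by
    rw [← Finset.mul_prod_erase Finset.univ (fun t => X (v t, c t)) (Finset.mem_univ s),
      ← Finset.mul_prod_erase Finset.univ (fun t => X (v t, d t)) (Finset.mem_univ s)]
    ring]
  exact NN_mul (mem_XmulX h) _
    (by have := deg_le_mul (n := n) (deg_prod_erase v c s) (deg_prod_erase v d s); omega)

-- ============ constraint reindexing ============

def Pterm (𝒞 : XorInstance n m) (i : Fin m) (α β : Fin 3 → ZMod 2) : Pl n :=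
  ∏ t, X ((𝒞 i).idx t, α t + β t)

lemma zsum1 : ∀ a0 a1 a2 b0 b1 b2 rb : ZMod 2, a0 + a1 + a2 = rb → b0 + b1 + b2 = 0 →
    (a0 + b0) + (a1 + b1) + (a2 + b2) = rb := by decide

lemma zsum2 : ∀ a0 a1 a2 b0 b1 b2 rb : ZMod 2, a0 + a1 + a2 = rb → b0 + b1 + b2 = rb →
    (a0 + b0) + (a1 + b1) + (a2 + b2) = 0 := by decide

lemma zcancel : ∀ a b : ZMod 2, a + (a + b) = b := by decide

/-- `β ↦ α + β` as an equivalence from satisfying assignments of the homogenized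
equation to those of the original equation. -/
def shiftE (i : Fin m) (α : SatAssign (𝒞 i)) :
    SatAssign (homogInst 𝒞 i) ≃ SatAssign (𝒞 i) where
  toFun β := ⟨fun t => α.1 t + β.1 t, zsum1 _ _ _ _ _ _ _ α.2 β.2⟩
  invFun γ := ⟨fun t => α.1 t + γ.1 t, zsum2 _ _ _ _ _ _ _ α.2 γ.2⟩
  left_inv β := by ext t; exact zcancel _ _
  right_inv γ := by ext t; exact zcancel _ _

/-- `α ↦ α + β` as an equivalence of satisfying assignments of the original equation. -/
def shiftE' (i : Fin m) (β : SatAssign (homogInst 𝒞 i)) :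
    SatAssign (𝒞 i) ≃ SatAssign (𝒞 i) where
  toFun α := ⟨fun t => α.1 t + β.1 t, zsum1 _ _ _ _ _ _ _ α.2 β.2⟩
  invFun γ := ⟨fun t => γ.1 t + β.1 t, by
    have := zsum1 _ _ _ _ _ _ _ γ.2 β.2; exact this⟩
  left_inv α := by
    ext t
    show α.1 t + β.1 t + β.1 t = α.1 t
    have : ∀ a b : ZMod 2, a + b + b = a := by decide
    exact this _ _
  right_inv γ := by
    ext t
    show γ.1 t + β.1 t + β.1 t = γ.1 t
    have : ∀ a b : ZMod 2, a + b + b = a := by decide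
    exact this _ _

lemma constrS_eq_sum_prod (i : Fin m) :
    constrS 𝒞 i = ∑ γ : SatAssign (𝒞 i), ∏ t, X ((𝒞 i).idx t, γ.1 t) := by
  refine Finset.sum_congr rfl fun γ _ => ?_
  rw [Fin.prod_univ_three]

lemma mem_rowC (i : Fin m) (α : SatAssign (𝒞 i)) :
    (∑ β : SatAssign (homogInst 𝒞 i), Pterm 𝒞 i α.1 β.1) - 1 ∈ NN 𝒞 3 := by
  have key : (∑ β : SatAssign (homogInst 𝒞 i), Pterm 𝒞 i α.1 β.1) = constrS 𝒞 i := by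
    rw [constrS_eq_sum_prod, ← Equiv.sum_comp (shiftE i α)
      (fun γ : SatAssign (𝒞 i) => ∏ t, X ((𝒞 i).idx t, γ.1 t))]
    rfl
  rw [key]
  exact mem_constr i

lemma mem_colC (i : Fin m) (β : SatAssign (homogInst 𝒞 i)) :
    (∑ α : SatAssign (𝒞 i), Pterm 𝒞 i α.1 β.1) - 1 ∈ NN 𝒞 3 := by
  have key : (∑ α : SatAssign (𝒞 i), Pterm 𝒞 i α.1 β.1) = constrS 𝒞 i := by
    rw [constrS_eq_sum_prod, ← Equiv.sum_comp (shiftE' i β)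
      (fun γ : SatAssign (𝒞 i) => ∏ t, X ((𝒞 i).idx t, γ.1 t))]
    rfl
  rw [key]
  exact mem_constr i

lemma mem_rowV (x : Fin n) (a : ZMod 2) :
    (∑ b : ZMod 2, X (x, a + b)) - 1 ∈ NN 𝒞 1 := by
  rw [sum_zmod2, add_zero]
  exact mem_line' x a

lemma mem_colV (x : Fin n) (b : ZMod 2) :
    (∑ a : ZMod 2, X (x, a + b)) - 1 ∈ NN 𝒞 1 := by
  have : (∑ a : ZMod 2, X (x, a + b) : Pl n) = ∑ a : ZMod 2, X (x, b + a) := by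
    refine Finset.sum_congr rfl fun a _ => ?_
    rw [add_comm]
  rw [this]
  exact mem_rowV x b

-- ============ adjacency in the gadget graph ============

section Adj

variable (𝒟 : XorInstance n m)

lemma adj_ll (x y : Fin n) (a b : ZMod 2) :
    (gadgetGraph 𝒟).Adj (Sum.inl (x, a)) (Sum.inl (y, b)) ↔ x = y ∧ a ≠ b := by
  rw [gadgetGraph, SimpleGraph.fromRel_adj]
  constructor
  · rintro ⟨hne, (⟨j, a', b', h1, h2⟩ | ⟨i, α, α', h1, h2⟩ | ⟨i, α, t, h1, h2⟩) |
      (⟨j, a', b', h1, h2⟩ | ⟨i, α, α', h1, h2⟩ | ⟨i, α, t, h1, h2⟩)⟩ <;> simp_all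
  · rintro ⟨rfl, hab⟩
    exact ⟨by simp [hab], Or.inl (Or.inl ⟨x, a, b, rfl, rfl⟩)⟩

lemma adj_rr (s s' : Σ i, SatAssign (𝒟 i)) :
    (gadgetGraph 𝒟).Adj (Sum.inr s) (Sum.inr s') ↔ s.1 = s'.1 ∧ s ≠ s' := by
  rw [gadgetGraph, SimpleGraph.fromRel_adj]
  constructor
  · rintro ⟨hne, (⟨j, a', b', h1, h2⟩ | ⟨i, α, α', h1, h2⟩ | ⟨i, α, t, h1, h2⟩) |
      (⟨j, a', b', h1, h2⟩ | ⟨i, α, α', h1, h2⟩ | ⟨i, α, t, h1, h2⟩)⟩ <;> simp_all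
  · rintro ⟨h1, hne⟩
    obtain ⟨i, α⟩ := s
    obtain ⟨i', α'⟩ := s'
    obtain rfl : i = i' := h1
    exact ⟨by simpa using hne, Or.inl (Or.inr (Or.inl ⟨i, α, α', rfl, rfl⟩))⟩

lemma adj_lr (x : Fin n) (a : ZMod 2) (s : Σ i, SatAssign (𝒟 i)) :
    (gadgetGraph 𝒟).Adj (Sum.inl (x, a)) (Sum.inr s) ↔
      ∃ t, x = (𝒟 s.1).idx t ∧ a = s.2.1 t := by
  rw [gadgetGraph, SimpleGraph.fromRel_adj]
  constructor
  · rintro ⟨hne, h | h⟩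
    · rcases h with ⟨j, a', b', h1, h2⟩ | ⟨i, α, α', h1, h2⟩ | ⟨i, α, t, h1, h2⟩
      · exact absurd h2 (by simp)
      · exact absurd h1 (by simp)
      · obtain rfl : s = ⟨i, α⟩ := Sum.inr_injective h2
        injection h1 with h1'
        injection h1' with hx ha
        exact ⟨t, hx, ha⟩
    · rcases h with ⟨j, a', b', h1, h2⟩ | ⟨i, α, α', h1, h2⟩ | ⟨i, α, t, h1, h2⟩
      · exact absurd h1 (by simp)
      · exact absurd h2 (by simp)
      · exact absurd h1 (by simp)
  · rintro ⟨t, h1, h2⟩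
    obtain ⟨i, α⟩ := s
    exact ⟨by simp, Or.inl (Or.inr (Or.inr ⟨i, α, t, by rw [h1, h2], rfl⟩))⟩

lemma adj_rl (s : Σ i, SatAssign (𝒟 i)) (x : Fin n) (a : ZMod 2) :
    (gadgetGraph 𝒟).Adj (Sum.inr s) (Sum.inl (x, a)) ↔
      ∃ t, x = (𝒟 s.1).idx t ∧ a = s.2.1 t := by
  rw [SimpleGraph.adj_comm]
  exact adj_lr 𝒟 x a s

lemma not_adj_rr_ne {i j : Fin m} (hij : i ≠ j) (α : SatAssign (𝒟 i))
    (β : SatAssign (𝒟 j)) :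
    ¬ (gadgetGraph 𝒟).Adj (Sum.inr ⟨i, α⟩) (Sum.inr ⟨j, β⟩) := by
  rw [adj_rr]
  rintro ⟨h, -⟩
  exact hij h

end Adj

-- ============ the per-edge sums ============

def Ssum (𝒞 : XorInstance n m) (u1 u2 : GVert 𝒞) : Pl n :=
  ∑ vv ∈ Finset.univ.filter
      (fun vv : GVert (homogInst 𝒞) × GVert (homogInst 𝒞) =>
        (gadgetGraph (homogInst 𝒞)).Adj vv.1 vv.2),
    subMap 𝒞 (u1, vv.1) * subMap 𝒞 (u2, vv.2)

lemma Ssum_eq (u1 u2 : GVert 𝒞) : Ssum 𝒞 u1 u2 =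
    ∑ v1 : GVert (homogInst 𝒞), ∑ v2 : GVert (homogInst 𝒞),
      if (gadgetGraph (homogInst 𝒞)).Adj v1 v2
      then subMap 𝒞 (u1, v1) * subMap 𝒞 (u2, v2) else 0 := by
  rw [Ssum, Finset.sum_filter, Fintype.sum_prod_type]

lemma Ssum_comm (u1 u2 : GVert 𝒞) : Ssum 𝒞 u1 u2 = Ssum 𝒞 u2 u1 := by
  rw [Ssum_eq, Ssum_eq, Finset.sum_comm]
  refine Finset.sum_congr rfl fun v1 _ => Finset.sum_congr rfl fun v2 _ => ?_
  rw [SimpleGraph.adj_comm, mul_comm]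

-- ============ row and column sums of the substitution ============

lemma row_l (x : Fin n) (a : ZMod 2) :
    ∑ v : GVert (homogInst 𝒞), subMap 𝒞 (Sum.inl (x, a), v)
      = ∑ b : ZMod 2, X (x, a + b) := by
  rw [Fintype.sum_sum_type]
  have hB : (∑ s : Σ i, SatAssign (homogInst 𝒞 i),
      subMap 𝒞 (Sum.inl (x, a), Sum.inr s)) = 0 := by simp
  rw [hB, add_zero, Fintype.sum_prod_type]
  rw [Finset.sum_eq_single_of_mem x (Finset.mem_univ x)
    (fun y _ hyx => by
      apply Finset.sum_eq_zero
      intro c _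
      rw [subMap_ll, if_neg (fun h => hyx h.symm)])]
  refine Finset.sum_congr rfl fun b _ => ?_
  rw [subMap_ll, if_pos rfl]

lemma row_r (i : Fin m) (α : SatAssign (𝒞 i)) :
    ∑ v : GVert (homogInst 𝒞), subMap 𝒞 (Sum.inr ⟨i, α⟩, v)
      = ∑ β : SatAssign (homogInst 𝒞 i), Pterm 𝒞 i α.1 β.1 := by
  rw [Fintype.sum_sum_type]
  have hA : (∑ p : Fin n × ZMod 2, subMap 𝒞 (Sum.inr ⟨i, α⟩, Sum.inl p)) = 0 := by
    apply Finset.sum_eq_zero; intro p _; obtain ⟨y, b⟩ := p; simp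
  rw [hA, zero_add, ← Finset.univ_sigma_univ, Finset.sum_sigma]
  rw [Finset.sum_eq_single_of_mem i (Finset.mem_univ i)
    (fun j _ hji => by
      apply Finset.sum_eq_zero
      intro β _
      rw [subMap_rr, if_neg (fun h => hji h.symm)])]
  refine Finset.sum_congr rfl fun β _ => ?_
  rw [subMap_rr, if_pos rfl]
  rfl

lemma col_l (x : Fin n) (b : ZMod 2) :
    ∑ u : GVert 𝒞, subMap 𝒞 (u, Sum.inl (x, b))
      = ∑ a : ZMod 2, X (x, a + b) := by
  rw [Fintype.sum_sum_type]
  have hB : (∑ s : Σ i, SatAssign (𝒞 i), subMap 𝒞 (Sum.inr s, Sum.inl (x, b))) = 0 := by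
    simp
  rw [hB, add_zero, Fintype.sum_prod_type]
  rw [Finset.sum_eq_single_of_mem x (Finset.mem_univ x)
    (fun y _ hyx => by
      apply Finset.sum_eq_zero
      intro c _
      rw [subMap_ll, if_neg hyx])]
  refine Finset.sum_congr rfl fun a _ => ?_
  rw [subMap_ll, if_pos rfl]

lemma col_r (i : Fin m) (β : SatAssign (homogInst 𝒞 i)) :
    ∑ u : GVert 𝒞, subMap 𝒞 (u, Sum.inr ⟨i, β⟩)
      = ∑ α : SatAssign (𝒞 i), Pterm 𝒞 i α.1 β.1 := by
  rw [Fintype.sum_sum_type]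
  have hA : (∑ p : Fin n × ZMod 2, subMap 𝒞 (Sum.inl p, Sum.inr ⟨i, β⟩)) = 0 := by
    apply Finset.sum_eq_zero; intro p _; obtain ⟨y, c⟩ := p; simp
  rw [hA, zero_add, ← Finset.univ_sigma_univ, Finset.sum_sigma]
  rw [Finset.sum_eq_single_of_mem i (Finset.mem_univ i)
    (fun j _ hji => by
      apply Finset.sum_eq_zero
      intro α _
      rw [subMap_rr, if_neg hji])]
  refine Finset.sum_congr rfl fun α _ => ?_
  rw [subMap_rr, if_pos rfl]
  rfl

lemma rowsum_mem (u : GVert 𝒞) :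
    (∑ v : GVert (homogInst 𝒞), subMap 𝒞 (u, v)) - 1 ∈ NN 𝒞 3 := by
  rcases u with ⟨x, a⟩ | ⟨i, α⟩
  · rw [row_l]
    exact NN_mono (by norm_num) (mem_rowV x a)
  · rw [row_r]
    exact mem_rowC i α

lemma colsum_mem (v : GVert (homogInst 𝒞)) :
    (∑ u : GVert 𝒞, subMap 𝒞 (u, v)) - 1 ∈ NN 𝒞 3 := by
  rcases v with ⟨x, b⟩ | ⟨i, β⟩
  · rw [col_l]
    exact NN_mono (by norm_num) (mem_colV x b)
  · rw [col_r]
    exact mem_colC i β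

lemma S_edge_ll (x : Fin n) (a b : ZMod 2) (hab : a ≠ b) :
    Ssum 𝒞 (Sum.inl (x, a)) (Sum.inl (x, b)) - 1 ∈ NN 𝒞 6 := by
  obtain rfl : b = a + 1 := zne a b hab
  have hS : Ssum 𝒞 (Sum.inl (x, a)) (Sum.inl (x, a + 1))
      = X (x, a) * X (x, a) + X (x, a + 1) * X (x, a + 1) := by
    rw [Ssum_eq]
    simp only [Fintype.sum_sum_type, Fintype.sum_prod_type, subMap_lr, subMap_rl,
      mul_zero, zero_mul, ite_self, Finset.sum_const_zero, add_zero]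
    rw [Finset.sum_eq_single_of_mem x (Finset.mem_univ x)
      (fun y _ hyx => by simp [Ne.symm hyx])]
    have hstep : ∀ c : ZMod 2, (∑ y' : Fin n, ∑ c' : ZMod 2,
        if (gadgetGraph (homogInst 𝒞)).Adj (Sum.inl (x, c)) (Sum.inl (y', c'))
        then subMap 𝒞 (Sum.inl (x, a), Sum.inl (x, c)) *
          subMap 𝒞 (Sum.inl (x, a + 1), Sum.inl (y', c'))
        else 0) = ∑ c' : ZMod 2, if c = c' then 0 else X (x, a + c) * X (x, a + 1 + c') := by
      intro c
      rw [Finset.sum_eq_single_of_mem x (Finset.mem_univ x)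
        (fun y' _ hyx => by simp [Ne.symm hyx])]
      refine Finset.sum_congr rfl fun c' _ => ?_
      by_cases hcc : c = c'
      · subst hcc
        rw [if_pos rfl, if_neg (by rw [adj_ll]; rintro ⟨-, h⟩; exact h rfl)]
      · rw [if_neg hcc, if_pos (by rw [adj_ll]; exact ⟨rfl, hcc⟩),
          subMap_ll, subMap_ll, if_pos rfl, if_pos rfl]
    rw [Finset.sum_congr rfl (fun c _ => hstep c)]
    rw [sum_zmod2 (fun c => ∑ c' : ZMod 2,
      if c = c' then 0 else X (x, a + c) * X (x, a + 1 + c'))]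
    rw [sum_zmod2, sum_zmod2]
    rw [if_pos rfl, if_pos rfl, if_neg (by decide : ¬ (0 : ZMod 2) = 1),
      if_neg (by decide : ¬ (1 : ZMod 2) = 0)]
    rw [add_zero, zadd11, add_zero, zero_add, add_zero]
  have e : Ssum 𝒞 (Sum.inl (x, a)) (Sum.inl (x, a + 1)) - 1
      = (X (x, a) ^ 2 - X (x, a)) + (X (x, a + 1) ^ 2 - X (x, a + 1))
        + (X (x, a) + X (x, a + 1) - 1) := by
    rw [hS]; ring
  rw [e]
  exact add_mem (add_mem (NN_mono (by norm_num) (mem_sq x a))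
    (NN_mono (by norm_num) (mem_sq x (a + 1))))
    (NN_mono (by norm_num) (mem_line' x a))

lemma zflip : ∀ b0 b1 b2 a0 a1 a2 c0 c1 c2 rb : ZMod 2, b0 + b1 + b2 = 0 →
    a0 + a1 + a2 = rb → c0 + c1 + c2 = rb →
    (b0 + a0 + c0) + (b1 + a1 + c1) + (b2 + a2 + c2) = 0 := by decide

lemma zw : ∀ a c b : ZMod 2, c + (b + a + c) = a + b := by decide
lemma zx : ∀ b p q : ZMod 2, b = b + p + q → p = q := by decide
lemma zq : ∀ a a' b b' : ZMod 2, b' ≠ b + a + a' → a + b ≠ a' + b' := by decide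

def flipA (i : Fin m) (α α' : SatAssign (𝒞 i)) (β : SatAssign (homogInst 𝒞 i)) :
    SatAssign (homogInst 𝒞 i) :=
  ⟨fun t => β.1 t + α.1 t + α'.1 t, zflip _ _ _ _ _ _ _ _ _ _ β.2 α.2 α'.2⟩

lemma S_edge_lr (i : Fin m) (α : SatAssign (𝒞 i)) (t₀ : Fin 3) :
    Ssum 𝒞 (Sum.inl ((𝒞 i).idx t₀, α.1 t₀)) (Sum.inr ⟨i, α⟩) - 1 ∈ NN 𝒞 6 := by
  set x := (𝒞 i).idx t₀ with hx
  set a := α.1 t₀ with ha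
  have hS : Ssum 𝒞 (Sum.inl (x, a)) (Sum.inr ⟨i, α⟩)
      = ∑ β : SatAssign (homogInst 𝒞 i), X (x, a + β.1 t₀) * Pterm 𝒞 i α.1 β.1 := by
    rw [Ssum_eq]
    simp only [Fintype.sum_sum_type, Fintype.sum_prod_type, subMap_lr, subMap_rl,
      mul_zero, zero_mul, ite_self, Finset.sum_const_zero, add_zero, zero_add]
    rw [Finset.sum_eq_single_of_mem x (Finset.mem_univ x)
      (fun y _ hyx => by simp [Ne.symm hyx])]
    have hstep : ∀ c : ZMod 2, (∑ s : Σ j, SatAssign (homogInst 𝒞 j),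
        if (gadgetGraph (homogInst 𝒞)).Adj (Sum.inl (x, c)) (Sum.inr s)
        then subMap 𝒞 (Sum.inl (x, a), Sum.inl (x, c)) * subMap 𝒞 (Sum.inr ⟨i, α⟩, Sum.inr s)
        else 0) = ∑ β : SatAssign (homogInst 𝒞 i),
          if c = β.1 t₀ then X (x, a + c) * Pterm 𝒞 i α.1 β.1 else 0 := by
      intro c
      rw [← Finset.univ_sigma_univ, Finset.sum_sigma]
      rw [Finset.sum_eq_single_of_mem i (Finset.mem_univ i)
        (fun j _ hji => by simp [show ¬ i = j from fun h => hji h.symm])]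
      refine Finset.sum_congr rfl fun β _ => ?_
      have hiff : (gadgetGraph (homogInst 𝒞)).Adj (Sum.inl (x, c)) (Sum.inr ⟨i, β⟩)
          ↔ c = β.1 t₀ := by
        rw [adj_lr]
        constructor
        · rintro ⟨s, h1, h2⟩
          obtain rfl : t₀ = s := (𝒞 i).inj h1
          exact h2
        · intro h
          exact ⟨t₀, rfl, h⟩
      rw [if_congr hiff rfl rfl, subMap_ll, subMap_rr, if_pos rfl, if_pos rfl]
      rfl
    rw [Finset.sum_congr rfl (fun c _ => hstep c), Finset.sum_comm]
    refine Finset.sum_congr rfl fun β _ => ?_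
    rw [Finset.sum_ite_eq' Finset.univ (β.1 t₀)
      (fun c => X (x, a + c) * Pterm 𝒞 i α.1 β.1), if_pos (Finset.mem_univ _)]
  have e : Ssum 𝒞 (Sum.inl (x, a)) (Sum.inr ⟨i, α⟩) - 1
      = (∑ β : SatAssign (homogInst 𝒞 i),
          (X (x, a + β.1 t₀) * Pterm 𝒞 i α.1 β.1 - Pterm 𝒞 i α.1 β.1))
        + ((∑ β : SatAssign (homogInst 𝒞 i), Pterm 𝒞 i α.1 β.1) - 1) := by
    rw [hS, Finset.sum_sub_distrib]; ring
  rw [e]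
  refine add_mem (Submodule.sum_mem _ fun β _ => ?_)
    (NN_mono (by norm_num) (mem_rowC i α))
  have e2 : X (x, a + β.1 t₀) * Pterm 𝒞 i α.1 β.1 - Pterm 𝒞 i α.1 β.1
      = (X (x, a + β.1 t₀) ^ 2 - X (x, a + β.1 t₀)) *
        ∏ t ∈ Finset.univ.erase t₀, X ((𝒞 i).idx t, α.1 t + β.1 t) := by
    rw [Pterm, ← Finset.mul_prod_erase Finset.univ
      (fun t => X ((𝒞 i).idx t, α.1 t + β.1 t)) (Finset.mem_univ t₀), ← hx, ← ha]
    ring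
  rw [e2]
  exact bool_mem _ _ (by
    have := deg_prod_erase (n := n) (fun t => (𝒞 i).idx t) (fun t => α.1 t + β.1 t) t₀
    omega)

lemma S_edge_rr (i : Fin m) (α α' : SatAssign (𝒞 i)) (hne : α ≠ α') :
    Ssum 𝒞 (Sum.inr ⟨i, α⟩) (Sum.inr ⟨i, α'⟩) - 1 ∈ NN 𝒞 6 := by
  have hS : Ssum 𝒞 (Sum.inr ⟨i, α⟩) (Sum.inr ⟨i, α'⟩)
      = ∑ β : SatAssign (homogInst 𝒞 i), ∑ β' : SatAssign (homogInst 𝒞 i),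
          if β = β' then 0 else Pterm 𝒞 i α.1 β.1 * Pterm 𝒞 i α'.1 β'.1 := by
    rw [Ssum_eq]
    simp only [Fintype.sum_sum_type, Fintype.sum_prod_type, subMap_lr, subMap_rl,
      mul_zero, zero_mul, ite_self, Finset.sum_const_zero, add_zero, zero_add]
    rw [← Finset.univ_sigma_univ, Finset.sum_sigma]
    rw [Finset.sum_eq_single_of_mem i (Finset.mem_univ i)
      (fun j _ hji => by simp [show ¬ i = j from fun h => hji h.symm])]
    have hstep : ∀ β : SatAssign (homogInst 𝒞 i), (∑ s : Σ j, SatAssign (homogInst 𝒞 j),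
        if (gadgetGraph (homogInst 𝒞)).Adj (Sum.inr ⟨i, β⟩) (Sum.inr s)
        then subMap 𝒞 (Sum.inr ⟨i, α⟩, Sum.inr ⟨i, β⟩) * subMap 𝒞 (Sum.inr ⟨i, α'⟩, Sum.inr s)
        else 0) = ∑ β' : SatAssign (homogInst 𝒞 i),
          if β = β' then 0 else Pterm 𝒞 i α.1 β.1 * Pterm 𝒞 i α'.1 β'.1 := by
      intro β
      rw [← Finset.univ_sigma_univ, Finset.sum_sigma]
      rw [Finset.sum_eq_single_of_mem i (Finset.mem_univ i)
        (fun j _ hji => by simp [show ¬ i = j from fun h => hji h.symm])]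
      refine Finset.sum_congr rfl fun β' _ => ?_
      have hiff : (gadgetGraph (homogInst 𝒞)).Adj (Sum.inr ⟨i, β⟩) (Sum.inr ⟨i, β'⟩)
          ↔ ¬ β = β' := by
        rw [adj_rr]
        simp
      rw [if_congr hiff rfl rfl, ite_not, subMap_rr, subMap_rr, if_pos rfl, if_pos rfl]
      rfl
    exact Finset.sum_congr rfl fun β _ => hstep β
  have hflip_ne : ∀ β : SatAssign (homogInst 𝒞 i), β ≠ flipA i α α' β := by
    intro β h
    have h1 : α.1 ≠ α'.1 := fun h' => hne (Subtype.ext h')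
    obtain ⟨t, ht⟩ := Function.ne_iff.mp h1
    have h2 : β.1 t = β.1 t + α.1 t + α'.1 t := congrArg (fun γ => γ.1 t) h
    exact ht (zx _ _ _ h2)
  have hPP : ∀ β : SatAssign (homogInst 𝒞 i),
      Pterm 𝒞 i α'.1 (flipA i α α' β).1 = Pterm 𝒞 i α.1 β.1 := by
    intro β
    refine Finset.prod_congr rfl fun t _ => ?_
    rw [show α'.1 t + (flipA i α α' β).1 t = α.1 t + β.1 t from zw _ _ _]
  have hS' : Ssum 𝒞 (Sum.inr ⟨i, α⟩) (Sum.inr ⟨i, α'⟩)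
      = ∑ β : SatAssign (homogInst 𝒞 i),
          ((Pterm 𝒞 i α.1 β.1) ^ 2 +
            ∑ β' ∈ Finset.univ.erase (flipA i α α' β),
              (if β = β' then 0 else Pterm 𝒞 i α.1 β.1 * Pterm 𝒞 i α'.1 β'.1)) := by
    rw [hS]
    refine Finset.sum_congr rfl fun β _ => ?_
    rw [← Finset.add_sum_erase Finset.univ _ (Finset.mem_univ (flipA i α α' β))]
    congr 1
    rw [if_neg (hflip_ne β), hPP β, sq]
  have e : Ssum 𝒞 (Sum.inr ⟨i, α⟩) (Sum.inr ⟨i, α'⟩) - 1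
      = (∑ β : SatAssign (homogInst 𝒞 i),
          ((Pterm 𝒞 i α.1 β.1) ^ 2 - Pterm 𝒞 i α.1 β.1))
        + (∑ β : SatAssign (homogInst 𝒞 i),
            ∑ β' ∈ Finset.univ.erase (flipA i α α' β),
              (if β = β' then 0 else Pterm 𝒞 i α.1 β.1 * Pterm 𝒞 i α'.1 β'.1))
        + ((∑ β : SatAssign (homogInst 𝒞 i), Pterm 𝒞 i α.1 β.1) - 1) := by
    rw [hS', Finset.sum_add_distrib, Finset.sum_sub_distrib]; ring
  rw [e]
  refine add_mem (add_mem (Submodule.sum_mem _ fun β _ => ?_)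
    (Submodule.sum_mem _ fun β _ => Submodule.sum_mem _ fun β' hβ' => ?_))
    (NN_mono (by norm_num) (mem_rowC i α))
  · exact mem_prodsq (fun t => (𝒞 i).idx t) (fun t => α.1 t + β.1 t)
  · by_cases hbb : β = β'
    · rw [if_pos hbb]; exact Submodule.zero_mem _
    · rw [if_neg hbb]
      have hne' : β'.1 ≠ (flipA i α α' β).1 :=
        fun h => (Finset.ne_of_mem_erase hβ') (Subtype.ext h)
      obtain ⟨s, hs⟩ := Function.ne_iff.mp hne'
      exact mem_prodprod (fun t => (𝒞 i).idx t) (fun t => α.1 t + β.1 t)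
        (fun t => α'.1 t + β'.1 t) s (zq _ _ _ _ hs)

lemma S_edge {u1 u2 : GVert 𝒞} (h : (gadgetGraph 𝒞).Adj u1 u2) :
    Ssum 𝒞 u1 u2 - 1 ∈ NN 𝒞 6 := by
  rcases u1 with ⟨x, a⟩ | ⟨i, α⟩ <;> rcases u2 with ⟨y, b⟩ | ⟨j, β⟩
  · rw [adj_ll] at h
    obtain ⟨rfl, hab⟩ := h
    exact S_edge_ll x a b hab
  · rw [adj_lr] at h
    obtain ⟨t, h1, h2⟩ := h
    subst h1; subst h2
    exact S_edge_lr j β t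
  · rw [adj_rl] at h
    obtain ⟨t, h1, h2⟩ := h
    subst h1; subst h2
    rw [Ssum_comm]
    exact S_edge_lr i α t
  · rw [adj_rr] at h
    obtain ⟨h1, h2⟩ := h
    obtain rfl : i = j := h1
    exact S_edge_rr i α β (fun hh => h2 (by rw [hh]))

lemma card_adj_pairs {V : Type*} [Fintype V] (G : SimpleGraph V) :
    (Finset.univ.filter fun uu : V × V => G.Adj uu.1 uu.2).card = 2 * (edges G).card := by
  classical
  have h1 : edges G = G.edgeFinset := by
    ext e
    simp [edges, SimpleGraph.mem_edgeFinset]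
  rw [h1, SimpleGraph.two_mul_card_edgeFinset]

lemma sq_sub_mem (uv : GVert 𝒞 × GVert (homogInst 𝒞)) :
    (subMap 𝒞 uv) ^ 2 - subMap 𝒞 uv ∈ NN 𝒞 6 := by
  have hz : ((0 : Pl n) ^ 2 - 0) = 0 := by ring
  obtain ⟨u, v⟩ := uv
  rcases u with ⟨x, a⟩ | ⟨i, α⟩ <;> rcases v with ⟨y, b⟩ | ⟨j, β⟩
  · rw [subMap_ll]
    split_ifs
    · exact NN_mono (by norm_num) (mem_sq _ _)
    · rw [hz]; exact Submodule.zero_mem _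
  · rw [subMap_lr, hz]; exact Submodule.zero_mem _
  · rw [subMap_rl, hz]; exact Submodule.zero_mem _
  · rw [subMap_rr]
    split_ifs
    · exact mem_prodsq (fun t => (𝒞 i).idx t) (fun t => α.1 t + β.1 t)
    · rw [hz]; exact Submodule.zero_mem _

/-- **SOS completeness.**  If there is a degree-`r` pseudo-expectation for
the 3XOR instance `𝒞`, then there is a degree-`⌊r/3⌋` pseudo-expectation for
isomorphism of `G_𝒞` and `G_{homog(𝒞)}`. -/
theorem sos_completeness (n m : ℕ) (𝒞 : XorInstance n m) (r : ℕ)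
    (h : ∃ PE : MvPolynomial (Fin n × ZMod 2) ℝ →ₗ[ℝ] ℝ, IsXorPseudoExpectation 𝒞 r PE) :
    ∃ PE' : MvPolynomial (GVert 𝒞 × GVert (homogInst 𝒞)) ℝ →ₗ[ℝ] ℝ,
      IsIsoPseudoExpectation (gadgetGraph 𝒞) (gadgetGraph (homogInst 𝒞)) (r / 3) PE' := by
  obtain ⟨PE, hPE1, hPE2, hPE3, hPE4, hPE5⟩ := h
  classical
  refine ⟨PE.comp (aeval (subMap 𝒞)).toLinearMap, ?_, ?_, ?_, ?_, ?_, ?_⟩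
  · simp only [LinearMap.coe_comp, Function.comp_apply, AlgHom.toLinearMap_apply,
      map_one]
    exact hPE1
  · intro u v q hq
    simp only [LinearMap.coe_comp, Function.comp_apply, AlgHom.toLinearMap_apply,
      map_mul, map_sub, map_pow, aeval_X]
    refine PE_vanish hPE2 hPE3 hPE4 (NN_mul (sq_sub_mem (u, v)) _ ?_)
    have h1 := totalDegree_aeval_le (subMap 𝒞) 3 (deg_subMap (𝒞 := 𝒞)) q
    omega
  · intro u q hq
    simp only [LinearMap.coe_comp, Function.comp_apply, AlgHom.toLinearMap_apply,
      map_mul, map_sub, map_sum, map_one, aeval_X]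
    refine PE_vanish hPE2 hPE3 hPE4 (NN_mul (rowsum_mem u) _ ?_)
    have h1 := totalDegree_aeval_le (subMap 𝒞) 3 (deg_subMap (𝒞 := 𝒞)) q
    omega
  · intro v q hq
    simp only [LinearMap.coe_comp, Function.comp_apply, AlgHom.toLinearMap_apply,
      map_mul, map_sub, map_sum, map_one, aeval_X]
    refine PE_vanish hPE2 hPE3 hPE4 (NN_mul (colsum_mem v) _ ?_)
    have h1 := totalDegree_aeval_le (subMap 𝒞) 3 (deg_subMap (𝒞 := 𝒞)) q
    omega
  · intro p hp
    simp only [LinearMap.coe_comp, Function.comp_apply, AlgHom.toLinearMap_apply,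
      map_mul, map_sub, map_sum, map_pow, aeval_X, aeval_C, algebraMap_eq]
    have hmem : (∑ uu ∈ Finset.univ.filter
          (fun uu : GVert 𝒞 × GVert 𝒞 => (gadgetGraph 𝒞).Adj uu.1 uu.2),
          Ssum 𝒞 uu.1 uu.2)
        - C (2 * (((edges (gadgetGraph 𝒞)).card : ℝ))) ∈ NN 𝒞 6 := by
      have h2 : ∑ uu ∈ Finset.univ.filter
          (fun uu : GVert 𝒞 × GVert 𝒞 => (gadgetGraph 𝒞).Adj uu.1 uu.2),
          (Ssum 𝒞 uu.1 uu.2 - 1) ∈ NN 𝒞 6 :=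
        Submodule.sum_mem _ fun uu huu => S_edge ((Finset.mem_filter.mp huu).2)
      have e : ∑ uu ∈ Finset.univ.filter
          (fun uu : GVert 𝒞 × GVert 𝒞 => (gadgetGraph 𝒞).Adj uu.1 uu.2),
          (Ssum 𝒞 uu.1 uu.2 - 1)
          = (∑ uu ∈ Finset.univ.filter
              (fun uu : GVert 𝒞 × GVert 𝒞 => (gadgetGraph 𝒞).Adj uu.1 uu.2),
              Ssum 𝒞 uu.1 uu.2)
            - C (2 * (((edges (gadgetGraph 𝒞)).card : ℝ))) := by
        rw [Finset.sum_sub_distrib, Finset.sum_const, card_adj_pairs, nsmul_eq_mul,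
          mul_one]
        congr 1
        rw [show (2 * ((edges (gadgetGraph 𝒞)).card : ℝ))
            = ((2 * (edges (gadgetGraph 𝒞)).card : ℕ) : ℝ) by push_cast; ring]
        exact (map_natCast (C : ℝ →+* Pl n) _).symm
      rw [← e]
      exact h2
    have hdeg : ((aeval (subMap 𝒞)) p ^ 2).totalDegree ≤ 6 * p.totalDegree := by
      have h1 := totalDegree_aeval_le (subMap 𝒞) 3 (deg_subMap (𝒞 := 𝒞)) p
      have h2 := totalDegree_pow ((aeval (subMap 𝒞)) p) 2
      omega
    have hz := PE_vanish hPE2 hPE3 hPE4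
      (NN_mul hmem (((aeval (subMap 𝒞)) p) ^ 2) (by omega))
    rw [← C_mul]
    exact le_of_eq hz.symm
  · intro p hp
    simp only [LinearMap.coe_comp, Function.comp_apply, AlgHom.toLinearMap_apply,
      map_pow]
    refine hPE5 _ ?_
    have h1 := totalDegree_aeval_le (subMap 𝒞) 3 (deg_subMap (𝒞 := 𝒞)) p
    omega



end Giso
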